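/- arXiv:2004.00829 — 3 statements merged into one kernel-verified Lean document; each statement's English description precedes it below -/
import Mathlib

section
/- For every ξ ∈ (0,∞), the operator A_ξ respects even–odd parity (it maps even functions to even functions and odd functions to odd functions), and the convex cones 𝒩 and 𝒰 are invariant under A_ξ: if v ∈ 𝒩 then A_ξ v ∈ 𝒩, and if u ∈ 𝒰 then A_ξ u ∈ 𝒰. -/
open MeasureTheory Filter Set

noncomputable section

/-- Convolution of two real functions on `ℝ`: `(a ∗ w)(x) = ∫ a(x − y) w(y) dy`. -/
def conv (a w : ℝ → ℝ) : ℝ → ℝ := fun x => ∫ y, a (x - y) * w y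

/-- `χ_ξ`, the indicator function of the interval `I_ξ = [−ξ, ξ]`. -/
def chi (ξ : ℝ) : ℝ → ℝ := Set.indicator (Set.Icc (-ξ) ξ) (fun _ => (1 : ℝ))

/-- The modified convolution operator `A_ξ v := χ_ξ · (a ∗ (χ_ξ · v))`. -/
def Axi (a : ℝ → ℝ) (ξ : ℝ) (v : ℝ → ℝ) : ℝ → ℝ :=
  fun x => chi ξ x * conv a (fun y => chi ξ y * v y) x

/-- The quadratic functional `F_ξ(v) := ½ ⟨χ_ξ·v, a ∗ (χ_ξ·v)⟩` in `L²(ℝ)`. -/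
def Fxi (a : ℝ → ℝ) (ξ : ℝ) (v : ℝ → ℝ) : ℝ :=
  (1 / 2) * ∫ x, (chi ξ x * v x) * conv a (fun y => chi ξ y * v y) x

/-- Standing assumptions on the convolution kernel `a`:
integrable, square integrable, bounded, even, nonnegative, nonincreasing on `[0,∞)`,
with total integral one. -/
structure KernelHyp (a : ℝ → ℝ) : Prop where
  integrable : Integrable a
  memL2 : MemLp a 2 volume
  bounded : ∃ C : ℝ, ∀ x, |a x| ≤ C
  even : ∀ x, a (-x) = a x
  nonneg : ∀ x, 0 ≤ a x
  antitone : AntitoneOn a (Set.Ici 0)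
  mass_one : (∫ x, a x) = 1

/-- Strict unimodality: `a` is differentiable with `a′(x) < 0` for all `x > 0`. -/
def StrictKernel (a : ℝ → ℝ) : Prop :=
  Differentiable ℝ a ∧ ∀ x, 0 < x → deriv a x < 0

/-- The cone `𝒰` of even, nonnegative, unimodal functions in `L²(ℝ)`. -/
def coneU (u : ℝ → ℝ) : Prop :=
  MemLp u 2 volume ∧ (∀ x, u (-x) = u x) ∧ (∀ x, 0 ≤ u x) ∧
    AntitoneOn u (Set.Ici 0)

/-- The cone `𝒩` of odd functions in `L²(ℝ)` that are nonpositive on `(0,∞)`. -/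
def coneN (v : ℝ → ℝ) : Prop :=
  MemLp v 2 volume ∧ (∀ x, v (-x) = -v x) ∧ ∀ x, 0 < x → v x ≤ 0

/-- The refined cone `𝒩̃_ξ`: elements of `𝒩` that are `C¹` on `I_ξ`, with negative
derivative at `0`, strictly negative on `(0, ξ]` and vanishing beyond `ξ`. -/
def coneNtilde (ξ : ℝ) (v : ℝ → ℝ) : Prop :=
  coneN v ∧ ContDiffOn ℝ 1 v (Set.Icc (-ξ) ξ) ∧ deriv v 0 < 0 ∧
    (∀ x, 0 < x → x ≤ ξ → v x < 0) ∧ ∀ x, ξ < x → v x = 0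

/-- The set of Rayleigh quotients `2 F_ξ(v)` over normalized odd `v ∈ L²(ℝ)`. -/
def rayleighSet (a : ℝ → ℝ) (ξ : ℝ) : Set ℝ :=
  {l | ∃ v : ℝ → ℝ, MemLp v 2 volume ∧ (∀ x, v (-x) = -v x) ∧
    (∫ x, (v x) ^ 2) = 1 ∧ l = 2 * Fxi a ξ v}

/-- `λ_ξ`, the largest eigenvalue of `A_ξ` on `L²_odd(ℝ)`, characterized variationally
as the supremum of the Rayleigh quotients. -/
def lamXi (a : ℝ → ℝ) (ξ : ℝ) : ℝ := sSup (rayleighSet a ξ)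

/-- `convPow a k` is the `(k+1)`-fold convolution power `a^{∗(k+1)}`. -/
def convPow (a : ℝ → ℝ) : ℕ → (ℝ → ℝ)
  | 0 => a
  | (k + 1) => conv a (convPow a k)

/-- The transformed kernel `ã := (1 − μ) Σ_{k≥0} μ^k a^{∗(k+1)}`. -/
def tildeKernel (a : ℝ → ℝ) (μ : ℝ) : ℝ → ℝ :=
  fun x => (1 - μ) * ∑' k : ℕ, μ ^ k * convPow a k x

/-- The bilinear nonlinearity `f(r) = ζ r + η max(r − θ, 0)`. -/
def bilin (ζ θ η r : ℝ) : ℝ := ζ * r + η * max (r - θ) 0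

lemma mulL2 {f g : ℝ → ℝ} (hf : MemLp f 2 volume) (hg : MemLp g 2 volume) :
    Integrable (fun y => f y * g y) := by
  rw [← memLp_one_iff_integrable]
  have := hg.smul (φ := f) hf (p := 2) (q := 2) (r := 1)
    (hpqr := ⟨by simp [ENNReal.inv_two_add_inv_two]⟩)
  exact this

lemma memL2_comp_neg {f : ℝ → ℝ} (hf : MemLp f 2 volume) : MemLp (fun y => f (-y)) 2 volume :=
  hf.comp_measurePreserving (Measure.measurePreserving_neg volume)

lemma transL2 {a : ℝ → ℝ} (ha : MemLp a 2 volume) (x : ℝ) :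
    MemLp (fun y => a (x - y)) 2 volume :=
  ha.comp_measurePreserving (Measure.measurePreserving_sub_left volume x)

lemma transL2' {a : ℝ → ℝ} (ha : MemLp a 2 volume) (x : ℝ) :
    MemLp (fun y => a (x + y)) 2 volume :=
  ha.comp_measurePreserving (measurePreserving_add_left volume x)

lemma integrable_comp_sub_left {f : ℝ → ℝ} (hf : Integrable f) (c : ℝ) :
    Integrable (fun y => f (c - y)) := by
  rw [← memLp_one_iff_integrable] at hf ⊢
  exact hf.comp_measurePreserving (Measure.measurePreserving_sub_left volume c)

lemma integrable_comp_neg {f : ℝ → ℝ} (hf : Integrable f) :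
    Integrable (fun y => f (-y)) := by
  rw [← memLp_one_iff_integrable] at hf ⊢
  exact hf.comp_measurePreserving (Measure.measurePreserving_neg volume)

lemma abs_le_abs_of_sq {s t : ℝ} (h : s ^ 2 ≤ t ^ 2) : |s| ≤ |t| := by
  nlinarith [abs_nonneg s, abs_nonneg t, sq_abs s, sq_abs t]

lemma even_anti {f : ℝ → ℝ} (hf : ∀ x, f (-x) = f x) (hm : AntitoneOn f (Set.Ici 0))
    {s t : ℝ} (h : |s| ≤ |t|) : f t ≤ f s := by
  have hs : f s = f |s| := by
    rcases abs_choice s with h' | h'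
    · rw [h']
    · rw [h', hf]
  have ht : f t = f |t| := by
    rcases abs_choice t with h' | h'
    · rw [h']
    · rw [h', hf]
  rw [hs, ht]
  exact hm (abs_nonneg s) (abs_nonneg t) h


lemma conv_integrand_integrable {a w : ℝ → ℝ} (ha : MemLp a 2 volume)
    (hw : MemLp w 2 volume) (x : ℝ) : Integrable (fun y => a (x - y) * w y) :=
  mulL2 (transL2 ha x) hw

lemma conv_reflect {a w : ℝ → ℝ} (hae : ∀ x, a (-x) = a x) (x : ℝ) :
    conv a w (-x) = ∫ y, a (x - y) * w (-y) := by
  have := MeasureTheory.integral_neg_eq_self (fun y => a (x - y) * w (-y)) volume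
  rw [conv, ← this]
  congr 1
  funext y
  rw [neg_neg, show x - -y = -(-x - y) by ring, hae]

lemma conv_even {a w : ℝ → ℝ} (hae : ∀ x, a (-x) = a x) (hwe : ∀ x, w (-x) = w x) (x : ℝ) :
    conv a w (-x) = conv a w x := by
  rw [conv_reflect hae]
  simp only [hwe]
  rfl

lemma conv_odd {a w : ℝ → ℝ} (hae : ∀ x, a (-x) = a x) (hwo : ∀ x, w (-x) = -w x) (x : ℝ) :
    conv a w (-x) = -conv a w x := by
  rw [conv_reflect hae]
  simp only [hwo, mul_neg]
  rw [integral_neg]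
  rfl

lemma conv_nonneg {a w : ℝ → ℝ} (han : ∀ x, 0 ≤ a x) (hwn : ∀ x, 0 ≤ w x) (x : ℝ) :
    0 ≤ conv a w x :=
  integral_nonneg fun y => mul_nonneg (han _) (hwn _)

lemma conv_nonpos {a w : ℝ → ℝ} (ha2 : MemLp a 2 volume) (hae : ∀ x, a (-x) = a x)
    (ham : AntitoneOn a (Set.Ici 0)) (hw : MemLp w 2 volume)
    (hwo : ∀ x, w (-x) = -w x) (hwn : ∀ x, 0 < x → w x ≤ 0) {x : ℝ} (hx : 0 < x) :
    conv a w x ≤ 0 := by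
  set h : ℝ → ℝ := fun y => a (x - y) * w y with hh
  have hint : Integrable h := conv_integrand_integrable ha2 hw x
  have hint2 : Integrable (fun y => h (-y)) := integrable_comp_neg hint
  have hw0 : w 0 = 0 := by have := hwo 0; rw [neg_zero] at this; linarith
  have key : ∀ y, h y + h (-y) ≤ 0 := by
    intro y
    have hhy : h y + h (-y) = (a (x - y) - a (x + y)) * w y := by
      simp only [hh, hwo, show x - -y = x + y by ring]
      ring
    rw [hhy]
    rcases lt_trichotomy y 0 with hy | hy | hy
    · have h1 : a (x - y) ≤ a (x + y) := by
        apply even_anti hae ham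
        apply abs_le_abs_of_sq
        nlinarith
      have h2 : 0 ≤ w y := by
        have := hwn (-y) (by linarith)
        rw [hwo] at this; linarith
      exact mul_nonpos_of_nonpos_of_nonneg (by linarith) h2
    · simp [hy, hw0]
    · have h1 : a (x + y) ≤ a (x - y) := by
        apply even_anti hae ham
        apply abs_le_abs_of_sq
        nlinarith
      exact mul_nonpos_of_nonneg_of_nonpos (by linarith) (hwn y hy)
  have h2 : (2 : ℝ) * conv a w x = ∫ y, (h y + h (-y)) := by
    rw [integral_add hint hint2, MeasureTheory.integral_neg_eq_self (fun y => h y) volume]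
    rw [conv, hh]
    ring
  have h3 : (∫ y, (h y + h (-y))) ≤ 0 := integral_nonpos key
  linarith

lemma conv_antitone {a w : ℝ → ℝ} (ha2 : MemLp a 2 volume) (hae : ∀ x, a (-x) = a x)
    (ham : AntitoneOn a (Set.Ici 0)) (hw : MemLp w 2 volume)
    (hwe : ∀ x, w (-x) = w x) (hwm : AntitoneOn w (Set.Ici 0)) :
    AntitoneOn (conv a w) (Set.Ici 0) := by
  intro x1 hx1 x2 hx2 h12
  simp only [Set.mem_Ici] at hx1 hx2
  set m : ℝ := (x1 + x2) / 2 with hm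
  have hm0 : 0 ≤ m := by simp [hm]; linarith
  set g : ℝ → ℝ := fun y => (a (x1 - y) - a (x2 - y)) * w y with hg
  have hint1 : Integrable (fun y => a (x1 - y) * w y) := conv_integrand_integrable ha2 hw x1
  have hint2 : Integrable (fun y => a (x2 - y) * w y) := conv_integrand_integrable ha2 hw x2
  have hgint : Integrable g := by
    have := hint1.sub hint2
    convert this using 1
    funext y
    simp [hg]; ring
  have hgint2 : Integrable (fun y => g (2 * m - y)) := integrable_comp_sub_left hgint _
  have key : ∀ y, 0 ≤ g y + g (2 * m - y) := by
    intro y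
    have e1 : x1 - (2 * m - y) = -(x2 - y) := by simp [hm]; ring
    have e2 : x2 - (2 * m - y) = -(x1 - y) := by simp [hm]; ring
    have hgy : g y + g (2 * m - y)
        = (a (x1 - y) - a (x2 - y)) * (w y - w (2 * m - y)) := by
      simp only [hg, e1, e2, hae]
      ring
    rw [hgy]
    rcases le_total y m with hy | hy
    · have h1 : a (x2 - y) ≤ a (x1 - y) := by
        apply even_anti hae ham; apply abs_le_abs_of_sq; nlinarith
      have h2 : w (2 * m - y) ≤ w y := by
        apply even_anti hwe hwm; apply abs_le_abs_of_sq; nlinarith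
      exact mul_nonneg (by linarith) (by linarith)
    · have h1 : a (x1 - y) ≤ a (x2 - y) := by
        apply even_anti hae ham; apply abs_le_abs_of_sq; nlinarith
      have h2 : w y ≤ w (2 * m - y) := by
        apply even_anti hwe hwm; apply abs_le_abs_of_sq; nlinarith
      nlinarith
  have hrefl : (∫ y, g (2 * m - y)) = ∫ y, g y :=
    MeasureTheory.integral_sub_left_eq_self g volume (2 * m)
  have hdiff : conv a w x1 - conv a w x2 = ∫ y, g y := by
    rw [conv, conv, ← integral_sub hint1 hint2]
    congr 1; funext y; simp [hg]; ring
  have h2 : (2 : ℝ) * (conv a w x1 - conv a w x2) = ∫ y, (g y + g (2 * m - y)) := by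
    rw [integral_add hgint hgint2, hrefl, hdiff]; ring
  have h3 : 0 ≤ ∫ y, (g y + g (2 * m - y)) := integral_nonneg key
  linarith


lemma chi_nonneg (ξ x : ℝ) : 0 ≤ chi ξ x := Set.indicator_nonneg (fun _ _ => zero_le_one) x

lemma chi_even (ξ x : ℝ) : chi ξ (-x) = chi ξ x := by
  unfold chi
  by_cases h : x ∈ Set.Icc (-ξ) ξ
  · rw [Set.mem_Icc] at h
    rw [Set.indicator_of_mem (Set.mem_Icc.2 ⟨by linarith [h.1, h.2], by linarith [h.1, h.2]⟩),
      Set.indicator_of_mem (Set.mem_Icc.2 h)]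
  · rw [Set.indicator_of_notMem (fun hm => by
        rw [Set.mem_Icc] at hm
        exact h (Set.mem_Icc.2 ⟨by linarith [hm.1, hm.2], by linarith [hm.1, hm.2]⟩)),
      Set.indicator_of_notMem h]

lemma chi_memL2 (ξ : ℝ) : MemLp (chi ξ) 2 volume :=
  memLp_indicator_const 2 measurableSet_Icc 1 (Or.inr (by simp))

lemma chiMul_eq_indicator (ξ : ℝ) (v : ℝ → ℝ) :
    (fun y => chi ξ y * v y) = Set.indicator (Set.Icc (-ξ) ξ) v := by
  funext y
  unfold chi
  by_cases h : y ∈ Set.Icc (-ξ) ξ <;>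
    simp [Set.indicator_of_mem, Set.indicator_of_notMem, h]

lemma chiMul_memL2 (ξ : ℝ) {v : ℝ → ℝ} (hv : MemLp v 2 volume) :
    MemLp (fun y => chi ξ y * v y) 2 volume := by
  rw [chiMul_eq_indicator]
  exact hv.indicator measurableSet_Icc

lemma conv_aesm {a w : ℝ → ℝ} (ha : MemLp a 2 volume) (hw : MemLp w 2 volume) :
    AEStronglyMeasurable (conv a w) volume := by
  have h1 : AEStronglyMeasurable
      (fun p : ℝ × ℝ => (ContinuousLinearMap.mul ℝ ℝ) (w p.2) (a (p.1 - p.2)))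
      ((volume : Measure ℝ).prod volume) :=
    AEStronglyMeasurable.convolution_integrand (ContinuousLinearMap.mul ℝ ℝ) hw.1 ha.1
  have h2 := h1.integral_prod_right'
  simp only [ContinuousLinearMap.mul_apply'] at h2
  have : conv a w = fun x => ∫ y, w y * a (x - y) := by
    funext x; rw [conv]; congr 1; funext y; ring
  rw [this]
  exact h2

lemma conv_bound {a w : ℝ → ℝ} {C : ℝ} (hC : ∀ x, |a x| ≤ C) (hw : Integrable w) (x : ℝ) :
    |conv a w x| ≤ C * ∫ y, |w y| := by
  rw [conv]
  calc |∫ y, a (x - y) * w y| ≤ ∫ y, |a (x - y) * w y| := by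
        simpa only [Real.norm_eq_abs] using
          norm_integral_le_integral_norm (μ := volume) (fun y => a (x - y) * w y)
    _ ≤ ∫ y, C * |w y| := by
        apply integral_mono_of_nonneg (Eventually.of_forall fun y => abs_nonneg _)
          (hw.abs.const_mul C)
        apply Eventually.of_forall
        intro y
        show |a (x - y) * w y| ≤ C * |w y|
        rw [abs_mul]
        exact mul_le_mul_of_nonneg_right (hC _) (abs_nonneg _)
    _ = C * ∫ y, |w y| := integral_const_mul C _



lemma Axi_memL2 {a : ℝ → ℝ} (hk : KernelHyp a) (ξ : ℝ) {v : ℝ → ℝ}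
    (hv : MemLp v 2 volume) : MemLp (Axi a ξ v) 2 volume := by
  set w := fun y => chi ξ y * v y with hw
  have hw2 : MemLp w 2 volume := chiMul_memL2 ξ hv
  have hwi : Integrable w := mulL2 (chi_memL2 ξ) hv
  obtain ⟨C, hC⟩ := hk.bounded
  have heq : Axi a ξ v = Set.indicator (Set.Icc (-ξ) ξ) (conv a w) :=
    chiMul_eq_indicator ξ (conv a w)
  rw [heq, memLp_indicator_iff_restrict measurableSet_Icc]
  haveI : IsFiniteMeasure (volume.restrict (Set.Icc (-ξ) ξ)) :=
    ⟨by rw [Measure.restrict_apply_univ]; exact measure_Icc_lt_top⟩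
  exact MemLp.of_bound ((conv_aesm hk.memL2 hw2).restrict) (C * ∫ y, |w y|)
    (Eventually.of_forall fun x => by
      simpa only [Real.norm_eq_abs] using conv_bound hC hwi x)

lemma chi_eq_one {ξ x : ℝ} (h1 : -ξ ≤ x) (h2 : x ≤ ξ) : chi ξ x = 1 :=
  Set.indicator_of_mem (Set.mem_Icc.2 ⟨h1, h2⟩) _

lemma chi_eq_zero {ξ x : ℝ} (h : ξ < x) : chi ξ x = 0 :=
  Set.indicator_of_notMem (fun hm => absurd (Set.mem_Icc.1 hm).2 (not_le.2 h)) _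

lemma chiMul_antitone {ξ : ℝ} (hξ : 0 < ξ) {u : ℝ → ℝ} (hun : ∀ x, 0 ≤ u x)
    (hum : AntitoneOn u (Set.Ici 0)) : AntitoneOn (fun x => chi ξ x * u x) (Set.Ici 0) := by
  intro x1 hx1 x2 hx2 h12
  simp only [Set.mem_Ici] at hx1 hx2
  simp only
  by_cases h2 : x2 ≤ ξ
  · rw [chi_eq_one (by linarith) (by linarith), chi_eq_one (by linarith) (by linarith), one_mul, one_mul]
    exact hum hx1 hx2 h12
  · rw [chi_eq_zero (not_le.1 h2), zero_mul]
    exact mul_nonneg (chi_nonneg _ _) (hun _)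




/-- For every `ξ ∈ (0,∞)`, the operator `A_ξ` respects even–odd parity
(it maps even functions to even functions and odd functions to odd functions), and the
convex cones `𝒩` and `𝒰` are invariant under `A_ξ`. -/
theorem stmt1 (a : ℝ → ℝ) (hk : KernelHyp a) (ξ : ℝ) (hξ : 0 < ξ) :
    (∀ v : ℝ → ℝ, MemLp v 2 volume → (∀ x, v (-x) = v x) →
      ∀ x, Axi a ξ v (-x) = Axi a ξ v x) ∧
    (∀ v : ℝ → ℝ, MemLp v 2 volume → (∀ x, v (-x) = -v x) →
      ∀ x, Axi a ξ v (-x) = -Axi a ξ v x) ∧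
    (∀ v : ℝ → ℝ, coneN v → coneN (Axi a ξ v)) ∧
    (∀ u : ℝ → ℝ, coneU u → coneU (Axi a ξ u)) := by
  have hchiE : ∀ (v : ℝ → ℝ), (∀ x, v (-x) = v x) →
      ∀ y, (fun y => chi ξ y * v y) (-y) = (fun y => chi ξ y * v y) y := by
    intro v hve y
    simp only
    rw [chi_even, hve]
  have hchiO : ∀ (v : ℝ → ℝ), (∀ x, v (-x) = -v x) →
      ∀ y, (fun y => chi ξ y * v y) (-y) = -(fun y => chi ξ y * v y) y := by
    intro v hvo y
    simp only
    rw [chi_even, hvo]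
    ring
  have heven : ∀ v : ℝ → ℝ, (∀ x, v (-x) = v x) →
      ∀ x, Axi a ξ v (-x) = Axi a ξ v x := by
    intro v hve x
    show chi ξ (-x) * conv a _ (-x) = chi ξ x * conv a _ x
    rw [chi_even, conv_even hk.even (hchiE v hve)]
  have hodd : ∀ v : ℝ → ℝ, (∀ x, v (-x) = -v x) →
      ∀ x, Axi a ξ v (-x) = -Axi a ξ v x := by
    intro v hvo x
    show chi ξ (-x) * conv a _ (-x) = -(chi ξ x * conv a _ x)
    rw [chi_even, conv_odd hk.even (hchiO v hvo)]
    ring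
  refine ⟨fun v _ hve => heven v hve, fun v _ hvo => hodd v hvo, ?_, ?_⟩
  · rintro v ⟨hv2, hvo, hvn⟩
    set w := fun y => chi ξ y * v y with hw
    have hw2 : MemLp w 2 volume := chiMul_memL2 ξ hv2
    refine ⟨Axi_memL2 hk ξ hv2, hodd v hvo, fun x hx => ?_⟩
    have h1 : conv a w x ≤ 0 :=
      conv_nonpos hk.memL2 hk.even hk.antitone hw2 (hchiO v hvo)
        (fun y hy => mul_nonpos_of_nonneg_of_nonpos (chi_nonneg _ _) (hvn y hy)) hx
    exact mul_nonpos_of_nonneg_of_nonpos (chi_nonneg _ _) h1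
  · rintro u ⟨hu2, hue, hun, hum⟩
    set w := fun y => chi ξ y * u y with hw
    have hw2 : MemLp w 2 volume := chiMul_memL2 ξ hu2
    have hwn : ∀ y, 0 ≤ w y := fun y => mul_nonneg (chi_nonneg _ _) (hun y)
    have hwm : AntitoneOn w (Set.Ici 0) := chiMul_antitone hξ hun hum
    have hconvn : ∀ x, 0 ≤ conv a w x := conv_nonneg hk.nonneg hwn
    have hconvm : AntitoneOn (conv a w) (Set.Ici 0) :=
      conv_antitone hk.memL2 hk.even hk.antitone hw2 (hchiE u hue) hwm
    exact ⟨Axi_memL2 hk ξ hu2, heven u hue,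
      fun x => mul_nonneg (chi_nonneg _ _) (hconvn x),
      chiMul_antitone hξ hconvn hconvm⟩
end
end

section
/- If σ ≥ ζ + η, then the equation σ u = a ∗ f(u) has no nontrivial nonnegative solution u ∈ L²(ℝ): any nonnegative u ∈ L²(ℝ) satisfying σ u = a ∗ f(u) with σ ≥ ζ + η must vanish almost everywhere. This follows since ‖a ∗ f(u)‖₂ ≤ ‖a‖₁ ‖f(u)‖₂ ≤ (ζ + η)‖u‖₂, with strict inequality for nontrivial nonnegative u. -/
open MeasureTheory Filter Set

noncomputable section

/-- If `σ ≥ ζ + η`, then the equation `σ u = a ∗ f(u)` has no nontrivial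
nonnegative solution `u ∈ L²(ℝ)`: any nonnegative `u ∈ L²(ℝ)` satisfying
`σ u = a ∗ f(u)` with `σ ≥ ζ + η` must vanish almost everywhere. -/
theorem stmt16 (a : ℝ → ℝ) (hk : KernelHyp a) (hs : StrictKernel a)
    (ζ θ η σ : ℝ) (hζ : 0 ≤ ζ) (hθ : 0 < θ) (hη : 0 < η) (hσ : ζ + η ≤ σ)
    (u : ℝ → ℝ) (hu : MemLp u 2 volume) (hupos : ∀ x, 0 ≤ u x)
    (heq : (fun x => σ * u x) =ᵐ[volume] conv a (fun y => bilin ζ θ η (u y))) :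
    u =ᵐ[volume] (0 : ℝ → ℝ) := by
  have hC : (0:ℝ) < ζ + η := by linarith
  have hσ0 : (0:ℝ) < σ := lt_of_lt_of_le hC hσ
  have hum : AEMeasurable u volume := hu.aestronglyMeasurable.aemeasurable
  have ham : Measurable a := hs.1.continuous.measurable
  have hgnn : ∀ y, 0 ≤ bilin ζ θ η (u y) := fun y =>
    add_nonneg (mul_nonneg hζ (hupos y)) (mul_nonneg hη.le (le_max_right _ _))
  have hgle : ∀ y, bilin ζ θ η (u y) ≤ (ζ + η) * u y := by
    intro y
    have h1 : max (u y - θ) 0 ≤ u y := max_le (by linarith [hupos y]) (hupos y)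
    unfold bilin
    nlinarith [hupos y]
  have hgm : AEMeasurable (fun y => bilin ζ θ η (u y)) volume := by
    have hc : Continuous (bilin ζ θ η) := by
      unfold bilin
      fun_prop
    exact hc.measurable.comp_aemeasurable hum
  set A : ℝ → ENNReal := fun x => ENNReal.ofReal (a x) with hAdef
  set G : ℝ → ENNReal := fun y => ENNReal.ofReal (bilin ζ θ η (u y)) with hGdef
  set U : ℝ → ENNReal := fun y => ENNReal.ofReal (u y) with hUdef
  have hAm : Measurable A := ham.ennreal_ofReal
  have hGm : AEMeasurable G volume := hgm.ennreal_ofReal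
  have hUm : AEMeasurable U volume := hum.ennreal_ofReal
  have hGfin : ∀ y, G y ≠ (⊤ : ENNReal) := fun y => ENNReal.ofReal_ne_top
  have hA1 : (∫⁻ x, A x) = 1 := by
    rw [hAdef, ← ofReal_integral_eq_lintegral_ofReal hk.integrable (ae_of_all _ hk.nonneg),
      hk.mass_one, ENNReal.ofReal_one]
  -- translation invariance
  have htransL : ∀ x : ℝ, (∫⁻ y, A (x - y)) = 1 := by
    intro x
    rw [(Measure.measurePreserving_sub_left volume x).lintegral_comp hAm]
    exact hA1
  have htransR : ∀ y : ℝ, (∫⁻ x, A (x - y)) = 1 := by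
    intro y
    rw [(measurePreserving_sub_right volume y).lintegral_comp hAm]
    exact hA1
  -- measurability of translated kernels
  have hAxm : ∀ x : ℝ, Measurable fun y => A (x - y) := fun x =>
    hAm.comp (measurable_const.sub measurable_id)
  -- Cauchy-Schwarz step
  have hCS : ∀ x : ℝ, (∫⁻ y, A (x - y) * G y) ≤ (∫⁻ y, A (x - y) * G y ^ (2:ℝ)) ^ ((1:ℝ)/2) := by
    intro x
    have hpq : Real.HolderConjugate 2 2 := Real.HolderConjugate.two_two
    have hf : AEMeasurable (fun y => (A (x - y)) ^ ((1:ℝ)/2)) volume :=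
      ((hAxm x).pow_const _).aemeasurable
    have hg2 : AEMeasurable (fun y => (A (x - y)) ^ ((1:ℝ)/2) * G y) volume :=
      hf.mul hGm
    have h := ENNReal.lintegral_mul_le_Lp_mul_Lq volume hpq hf hg2
    have e1 : ∀ y : ℝ,
        ((fun y => (A (x - y)) ^ ((1:ℝ)/2)) * fun y => (A (x - y)) ^ ((1:ℝ)/2) * G y) y
          = A (x - y) * G y := by
      intro y
      simp only [Pi.mul_apply]
      rw [← mul_assoc, ← ENNReal.rpow_add_of_nonneg _ _ (by norm_num) (by norm_num)]
      norm_num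
    have e2 : ∀ y : ℝ, ((A (x - y)) ^ ((1:ℝ)/2)) ^ (2:ℝ) = A (x - y) := by
      intro y
      rw [← ENNReal.rpow_mul]
      norm_num
    have e3 : ∀ y : ℝ, ((A (x - y)) ^ ((1:ℝ)/2) * G y) ^ (2:ℝ)
        = A (x - y) * G y ^ (2:ℝ) := by
      intro y
      rw [ENNReal.mul_rpow_of_nonneg _ _ (by norm_num : (0:ℝ) ≤ 2), e2]
    calc (∫⁻ y, A (x - y) * G y)
        = ∫⁻ y, ((fun y => (A (x - y)) ^ ((1:ℝ)/2)) * fun y => (A (x - y)) ^ ((1:ℝ)/2) * G y) y := by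
          exact lintegral_congr fun y => (e1 y).symm
      _ ≤ (∫⁻ y, ((A (x - y)) ^ ((1:ℝ)/2)) ^ (2:ℝ)) ^ ((1:ℝ)/2)
            * (∫⁻ y, ((A (x - y)) ^ ((1:ℝ)/2) * G y) ^ (2:ℝ)) ^ ((1:ℝ)/2) := h
      _ = (∫⁻ y, A (x - y)) ^ ((1:ℝ)/2) * (∫⁻ y, A (x - y) * G y ^ (2:ℝ)) ^ ((1:ℝ)/2) := by
          rw [lintegral_congr e2, lintegral_congr e3]
      _ = (∫⁻ y, A (x - y) * G y ^ (2:ℝ)) ^ ((1:ℝ)/2) := by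
          rw [htransL x, ENNReal.one_rpow, one_mul]
  -- pointwise a.e. bound
  have key : ∀ᵐ x ∂volume, (ENNReal.ofReal σ) ^ (2:ℝ) * U x ^ (2:ℝ)
      ≤ ∫⁻ y, A (x - y) * G y ^ (2:ℝ) := by
    filter_upwards [heq] with x hx
    have h0 : ENNReal.ofReal (σ * u x)
        ≤ ∫⁻ y, A (x - y) * G y := by
      rw [hx]
      by_cases hi : Integrable (fun y => a (x - y) * bilin ζ θ η (u y)) volume
      · have hnn : 0 ≤ᵐ[volume] fun y => a (x - y) * bilin ζ θ η (u y) :=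
          ae_of_all _ fun y => mul_nonneg (hk.nonneg _) (hgnn y)
        have := ofReal_integral_eq_lintegral_ofReal hi hnn
        have e : ∀ y : ℝ, ENNReal.ofReal (a (x - y) * bilin ζ θ η (u y))
            = A (x - y) * G y := fun y => ENNReal.ofReal_mul (hk.nonneg _)
        rw [conv]
        rw [this, lintegral_congr e]
      · rw [conv, integral_undef hi]
        simp
    have h1 : ENNReal.ofReal σ * U x ≤ ∫⁻ y, A (x - y) * G y := by
      rwa [ENNReal.ofReal_mul hσ0.le] at h0
    have h2 : ENNReal.ofReal σ * U x ≤ (∫⁻ y, A (x - y) * G y ^ (2:ℝ)) ^ ((1:ℝ)/2) :=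
      h1.trans (hCS x)
    have h3 := ENNReal.rpow_le_rpow h2 (by norm_num : (0:ℝ) ≤ 2)
    rwa [ENNReal.mul_rpow_of_nonneg _ _ (by norm_num : (0:ℝ) ≤ 2), ← ENNReal.rpow_mul,
      one_div, inv_mul_cancel₀ (two_ne_zero), ENNReal.rpow_one] at h3
  -- integrate the pointwise bound
  have hU2m : AEMeasurable (fun x => U x ^ (2:ℝ)) volume := hUm.pow_const _
  have hG2m : AEMeasurable (fun y => G y ^ (2:ℝ)) volume := hGm.pow_const _
  have hswap : (∫⁻ x, ∫⁻ y, A (x - y) * G y ^ (2:ℝ)) = ∫⁻ y, G y ^ (2:ℝ) := by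
    have hmprod : AEMeasurable (fun p : ℝ × ℝ => A (p.1 - p.2) * G p.2 ^ (2:ℝ))
        (volume.prod volume) := by
      have h1 : Measurable fun p : ℝ × ℝ => A (p.1 - p.2) :=
        hAm.comp (measurable_fst.sub measurable_snd)
      have h2 : AEMeasurable (fun p : ℝ × ℝ => G p.2 ^ (2:ℝ)) (volume.prod volume) :=
        (hG2m.comp_quasiMeasurePreserving Measure.quasiMeasurePreserving_snd)
      exact h1.aemeasurable.mul h2
    rw [lintegral_lintegral_swap hmprod]
    have : ∀ y : ℝ, (∫⁻ x, A (x - y) * G y ^ (2:ℝ)) = G y ^ (2:ℝ) := by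
      intro y
      rw [lintegral_mul_const' _ _ (by
        exact ENNReal.rpow_ne_top_of_nonneg (by norm_num) (hGfin y)), htransR y, one_mul]
    exact lintegral_congr this
  have hmain : (ENNReal.ofReal σ) ^ (2:ℝ) * (∫⁻ x, U x ^ (2:ℝ)) ≤ ∫⁻ y, G y ^ (2:ℝ) := by
    calc (ENNReal.ofReal σ) ^ (2:ℝ) * (∫⁻ x, U x ^ (2:ℝ))
        = ∫⁻ x, (ENNReal.ofReal σ) ^ (2:ℝ) * U x ^ (2:ℝ) := (lintegral_const_mul'' _ hU2m).symm
      _ ≤ ∫⁻ x, ∫⁻ y, A (x - y) * G y ^ (2:ℝ) := lintegral_mono_ae key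
      _ = ∫⁻ y, G y ^ (2:ℝ) := hswap
  -- pointwise comparison G ≤ (ζ+η) U
  have hGleU : ∀ y, G y ^ (2:ℝ) ≤ (ENNReal.ofReal (ζ+η)) ^ (2:ℝ) * U y ^ (2:ℝ) := by
    intro y
    rw [← ENNReal.mul_rpow_of_nonneg _ _ (by norm_num : (0:ℝ) ≤ 2)]
    refine ENNReal.rpow_le_rpow ?_ (by norm_num)
    rw [hGdef, hUdef, ← ENNReal.ofReal_mul hC.le]
    exact ENNReal.ofReal_le_ofReal (hgle y)
  have hup : ∫⁻ y, G y ^ (2:ℝ) ≤ (ENNReal.ofReal (ζ+η)) ^ (2:ℝ) * ∫⁻ x, U x ^ (2:ℝ) := by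
    rw [← lintegral_const_mul'' _ hU2m]
    exact lintegral_mono hGleU
  -- finiteness of ∫ U²
  have hIfin : (∫⁻ x, U x ^ (2:ℝ)) ≠ (⊤ : ENNReal) := by
    have e : ∀ x : ℝ, U x ^ (2:ℝ) = ENNReal.ofReal (u x ^ 2) := by
      intro x
      rw [hUdef, ENNReal.ofReal_rpow_of_nonneg (hupos x) (by norm_num)]
      norm_num [Real.rpow_natCast (u x) 2]
    rw [lintegral_congr e,
      ← ofReal_integral_eq_lintegral_ofReal hu.integrable_sq (ae_of_all _ fun x => sq_nonneg _)]
    exact ENNReal.ofReal_ne_top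
  -- equality forced
  have hCσ : (ENNReal.ofReal (ζ+η)) ^ (2:ℝ) ≤ (ENNReal.ofReal σ) ^ (2:ℝ) :=
    ENNReal.rpow_le_rpow (ENNReal.ofReal_le_ofReal hσ) (by norm_num)
  have heqint : (∫⁻ y, G y ^ (2:ℝ))
      = (ENNReal.ofReal (ζ+η)) ^ (2:ℝ) * ∫⁻ x, U x ^ (2:ℝ) := by
    refine le_antisymm hup ?_
    calc (ENNReal.ofReal (ζ+η)) ^ (2:ℝ) * ∫⁻ x, U x ^ (2:ℝ)
        ≤ (ENNReal.ofReal σ) ^ (2:ℝ) * ∫⁻ x, U x ^ (2:ℝ) :=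
          mul_le_mul_left hCσ _
      _ ≤ ∫⁻ y, G y ^ (2:ℝ) := hmain
  -- deduce a.e. pointwise equality
  have hJfin : (∫⁻ y, G y ^ (2:ℝ)) ≠ (⊤ : ENNReal) := by
    rw [heqint]
    exact ENNReal.mul_ne_top (ENNReal.rpow_ne_top_of_nonneg (by norm_num)
      ENNReal.ofReal_ne_top) hIfin
  have hsub : (∫⁻ y, (ENNReal.ofReal (ζ+η)) ^ (2:ℝ) * U y ^ (2:ℝ) - G y ^ (2:ℝ)) = 0 := by
    rw [lintegral_sub' hG2m hJfin (ae_of_all _ hGleU), lintegral_const_mul'' _ hU2m,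
      ← heqint, tsub_self]
  have hae : (fun y => (ENNReal.ofReal (ζ+η)) ^ (2:ℝ) * U y ^ (2:ℝ) - G y ^ (2:ℝ))
      =ᵐ[volume] (fun _ => (0:ENNReal)) :=
    (lintegral_eq_zero_iff' (((aemeasurable_const.pow_const _).mul hU2m).sub hG2m)).mp hsub
  -- conclude
  filter_upwards [hae] with x hx
  have hle : (ENNReal.ofReal (ζ+η)) ^ (2:ℝ) * U x ^ (2:ℝ) ≤ G x ^ (2:ℝ) :=
    tsub_eq_zero_iff_le.mp hx
  have heq2 : G x ^ (2:ℝ) = ((ENNReal.ofReal (ζ+η)) * U x) ^ (2:ℝ) := by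
    rw [ENNReal.mul_rpow_of_nonneg _ _ (by norm_num : (0:ℝ) ≤ 2)]
    exact le_antisymm (hGleU x) hle
  have heq3 : G x = ENNReal.ofReal (ζ+η) * U x :=
    ENNReal.rpow_left_injective (two_ne_zero) heq2
  have heq4 : bilin ζ θ η (u x) = (ζ + η) * u x := by
    rw [hGdef, hUdef, ← ENNReal.ofReal_mul hC.le] at heq3
    exact (ENNReal.ofReal_eq_ofReal_iff (hgnn x)
      (mul_nonneg hC.le (hupos x))).mp heq3
  have hmax : max (u x - θ) 0 = u x := by
    unfold bilin at heq4
    have := hη.ne'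
    nlinarith [heq4]
  by_contra hne
  have hx0 : 0 < u x := lt_of_le_of_ne (hupos x) (Ne.symm hne)
  have : max (u x - θ) 0 < u x := max_lt (by linarith) hx0
  rw [hmax] at this
  exact lt_irrefl _ this
end
end

section
/- If ζ > 0 and σ ≤ ζ, then the equation σ u = a ∗ f(u) has no nontrivial nonnegative solution u ∈ L¹(ℝ) ∩ L²(ℝ): any nonnegative u ∈ L¹(ℝ) ∩ L²(ℝ) with σ u = a ∗ f(u) and σ ≤ ζ vanishes almost everywhere. The proof uses the integral identity σ ∫_ℝ u(x) dx = ∫_ℝ f(u(x)) dx together with f(r) ≥ ζ r for r ≥ 0. -/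
open MeasureTheory Filter Set

noncomputable section

section Stmt17Aux

variable {a : ℝ → ℝ}

/-- Bounded-by-one continuous multiplier times an integrable function is integrable. -/
lemma stmt17_int_mul (ha : Integrable a) (hca : Continuous a) {g : ℝ → ℝ}
    (hg : Continuous g) (hb : ∀ x, |g x| ≤ 1) :
    Integrable (fun x => a x * g x) := by
  refine ha.abs.mono' ((hca.mul hg).aestronglyMeasurable) ?_
  filter_upwards with x
  rw [Real.norm_eq_abs, abs_mul]
  exact mul_le_of_le_one_right (abs_nonneg _) (hb x)

/-- The kernel is everywhere strictly positive. -/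
lemma stmt17_kernel_pos (hk : KernelHyp a) (hs : StrictKernel a) : ∀ x, 0 < a x := by
  have h0 : ∀ x : ℝ, 0 ≤ x → 0 < a x := by
    intro x hx
    by_contra h
    have hax : a x = 0 := le_antisymm (not_lt.mp h) (hk.nonneg x)
    have hz : ∀ y, x ≤ y → a y = 0 := fun y hy =>
      le_antisymm (hax ▸ hk.antitone (mem_Ici.mpr hx) (mem_Ici.mpr (hx.trans hy)) hy)
        (hk.nonneg y)
    have hev : a =ᶠ[nhds (x + 1)] fun _ => (0 : ℝ) := by
      filter_upwards [Ioi_mem_nhds (show x < x + 1 by linarith)] with y hy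
      exact hz y (le_of_lt hy)
    have hd0 : deriv a (x + 1) = 0 := by
      rw [hev.deriv_eq]; simp
    have := hs.2 (x + 1) (by linarith)
    linarith
  intro x
  rcases le_or_gt 0 x with hx | hx
  · exact h0 x hx
  · rw [← hk.even x]
    exact h0 (-x) (by linarith)

/-- Fubini identity for integrals of a convolution against a bounded continuous weight. -/
lemma stmt17_fubini (hk : KernelHyp a) (hs : StrictKernel a) {w : ℝ → ℝ}
    (hw : Integrable w) {g : ℝ → ℝ} (hg : Continuous g) (hgb : ∀ x, |g x| ≤ 1) :
    ∫ x, conv a w x * g x = ∫ y, w y * ∫ x, a (x - y) * g x := by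
  have ha := hk.integrable
  have hG : Integrable (fun q : ℝ × ℝ => a q.1 * w q.2) (volume.prod volume) :=
    ha.mul_prod hw
  have hT : MeasurePreserving (fun z : ℝ × ℝ => (z.1 - z.2, z.2))
      ((volume : Measure ℝ).prod volume) ((volume : Measure ℝ).prod volume) :=
    measurePreserving_sub_prod volume volume
  have hH : Integrable (fun p : ℝ × ℝ => a (p.1 - p.2) * w p.2) (volume.prod volume) := by
    have := (hT.integrable_comp hG.aestronglyMeasurable).mpr hG
    simpa [Function.comp_def] using this
  have hF : Integrable (Function.uncurry fun x y => g x * (a (x - y) * w y))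
      (volume.prod volume) := by
    refine hH.bdd_mul (c := 1)
      ((hg.comp continuous_fst).aestronglyMeasurable) ?_
    filter_upwards with p
    rw [Real.norm_eq_abs]
    exact hgb p.1
  have hswap := integral_integral_swap hF
  have hL : ∫ x, conv a w x * g x = ∫ x, ∫ y, g x * (a (x - y) * w y) := by
    refine integral_congr_ae (Eventually.of_forall fun x => ?_)
    show conv a w x * g x = ∫ y, g x * (a (x - y) * w y)
    simp only [conv]
    rw [mul_comm, ← integral_const_mul]
  have hR : ∀ y, (∫ x, g x * (a (x - y) * w y)) = w y * ∫ x, a (x - y) * g x := by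
    intro y
    rw [← integral_const_mul]
    exact integral_congr_ae (Eventually.of_forall fun x => by ring)
  rw [hL, hswap]
  exact integral_congr_ae (Eventually.of_forall fun y => hR y)

/-- Translation of the kernel integrated against a cosine. -/
lemma stmt17_inner (hk : KernelHyp a) (hs : StrictKernel a) (k y : ℝ) :
    ∫ x, a (x - y) * Real.cos (k * x)
      = (∫ z, a z * Real.cos (k * z)) * Real.cos (k * y) := by
  have ha := hk.integrable
  have hca := hs.1.continuous
  have hcos : Continuous fun x : ℝ => Real.cos (k * x) := by fun_prop
  have hsin : Continuous fun x : ℝ => Real.sin (k * x) := by fun_prop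
  have hic : Integrable (fun x => a x * Real.cos (k * x)) :=
    stmt17_int_mul ha hca hcos (fun x => Real.abs_cos_le_one _)
  have his : Integrable (fun x => a x * Real.sin (k * x)) :=
    stmt17_int_mul ha hca hsin (fun x => Real.abs_sin_le_one _)
  have h1 : ∫ x, a (x - y) * Real.cos (k * x)
      = ∫ x, a x * Real.cos (k * (x + y)) := by
    rw [← integral_add_right_eq_self (fun x => a (x - y) * Real.cos (k * x)) y]
    simp
  have h2 : ∀ x, a x * Real.cos (k * (x + y))
      = a x * Real.cos (k * x) * Real.cos (k * y)
        - a x * Real.sin (k * x) * Real.sin (k * y) := by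
    intro x; rw [mul_add, Real.cos_add]; ring
  have hodd : (∫ x, a x * Real.sin (k * x)) = 0 := by
    have hneg := integral_neg_eq_self (fun x => a x * Real.sin (k * x)) (volume : Measure ℝ)
    have : ∫ x, (fun x => a x * Real.sin (k * x)) (-x)
        = - ∫ x, a x * Real.sin (k * x) := by
      rw [← integral_neg]
      refine integral_congr_ae (Eventually.of_forall fun x => ?_)
      simp [hk.even, mul_comm, Real.sin_neg, mul_neg]
    rw [this] at hneg
    linarith
  rw [h1]
  calc ∫ x, a x * Real.cos (k * (x + y))
      = ∫ x, (a x * Real.cos (k * x) * Real.cos (k * y)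
          - a x * Real.sin (k * x) * Real.sin (k * y)) :=
        integral_congr_ae (Eventually.of_forall fun x => h2 x)
    _ = (∫ x, a x * Real.cos (k * x)) * Real.cos (k * y)
        - (∫ x, a x * Real.sin (k * x)) * Real.sin (k * y) := by
        rw [integral_sub (hic.mul_const _) (his.mul_const _),
          integral_mul_const, integral_mul_const]
    _ = (∫ z, a z * Real.cos (k * z)) * Real.cos (k * y) := by rw [hodd]; ring

/-- For `k ≠ 0`, the cosine transform of the kernel is strictly less than `1`. -/
lemma stmt17_A_lt_one (hk : KernelHyp a) (hs : StrictKernel a) {k : ℝ} (hkne : k ≠ 0) :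
    (∫ z, a z * Real.cos (k * z)) < 1 := by
  have ha := hk.integrable
  have hca := hs.1.continuous
  have hcos : Continuous fun x : ℝ => Real.cos (k * x) := by fun_prop
  have hic : Integrable (fun x => a x * Real.cos (k * x)) :=
    stmt17_int_mul ha hca hcos (fun x => Real.abs_cos_le_one _)
  set g : ℝ → ℝ := fun z => a z * (1 - Real.cos (k * z)) with hgdef
  have hgeq : ∀ z, g z = a z - a z * Real.cos (k * z) := fun z => by
    simp only [hgdef]; ring
  have hgint : Integrable g := by
    have := ha.sub hic
    exact this.congr (Eventually.of_forall fun z => (hgeq z).symm)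
  have hgnn : ∀ z, 0 ≤ g z := fun z =>
    mul_nonneg (hk.nonneg z) (by nlinarith [Real.cos_le_one (k * z)])
  have hgcont : Continuous g := by
    have : Continuous fun z : ℝ => (1 : ℝ) - Real.cos (k * z) := by fun_prop
    exact hca.mul this
  have hx0 : g (Real.pi / k) ≠ 0 := by
    have hc : Real.cos (k * (Real.pi / k)) = -1 := by
      rw [mul_comm, div_mul_cancel₀ _ hkne]
      exact Real.cos_pi
    have hapos := stmt17_kernel_pos hk hs (Real.pi / k)
    simp only [hgdef, hc]
    positivity
  have hpos : 0 < ∫ z, g z := by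
    rw [integral_pos_iff_support_of_nonneg hgnn hgint]
    have hopen : IsOpen (Function.support g) := by
      have : Function.support g = {z | g z = 0}ᶜ := by
        ext z; simp [Function.mem_support]
      rw [this]
      exact (isClosed_eq hgcont continuous_const).isOpen_compl
    exact hopen.measure_pos volume ⟨Real.pi / k, Function.mem_support.mpr hx0⟩
  have hsplit : ∫ z, g z = 1 - ∫ z, a z * Real.cos (k * z) := by
    have : ∫ z, g z = (∫ z, a z) - ∫ z, a z * Real.cos (k * z) := by
      rw [← integral_sub ha hic]
      exact integral_congr_ae (Eventually.of_forall fun z => hgeq z)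
    rw [this, hk.mass_one]
  linarith

end Stmt17Aux

/-- If `ζ > 0` and `σ ≤ ζ`, then the equation `σ u = a ∗ f(u)` has no
nontrivial nonnegative solution `u ∈ L¹(ℝ) ∩ L²(ℝ)`: any nonnegative
`u ∈ L¹(ℝ) ∩ L²(ℝ)` with `σ u = a ∗ f(u)` and `σ ≤ ζ` vanishes almost everywhere. -/
theorem stmt17 (a : ℝ → ℝ) (hk : KernelHyp a) (hs : StrictKernel a)
    (ζ θ η σ : ℝ) (hζ : 0 < ζ) (hθ : 0 < θ) (hη : 0 < η) (hσ : σ ≤ ζ)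
    (u : ℝ → ℝ) (hu1 : Integrable u) (hu2 : MemLp u 2 volume) (hupos : ∀ x, 0 ≤ u x)
    (heq : (fun x => σ * u x) =ᵐ[volume] conv a (fun y => bilin ζ θ η (u y))) :
    u =ᵐ[volume] (0 : ℝ → ℝ) := by
  have ha := hk.integrable
  have hca := hs.1.continuous
  set w : ℝ → ℝ := fun y => bilin ζ θ η (u y) with hwdef
  set m : ℝ → ℝ := fun y => max (u y - θ) 0 with hmdef
  have hw_eq : ∀ y, w y = ζ * u y + η * m y := fun y => rfl
  have hm_nonneg : ∀ y, 0 ≤ m y := fun y => le_max_right _ _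
  have hm_le : ∀ y, m y ≤ u y := fun y => max_le (by linarith [hupos y]) (hupos y)
  have hm_meas : AEStronglyMeasurable m volume := by
    have hc : Continuous fun r : ℝ => max (r - θ) 0 :=
      (continuous_id.sub continuous_const).max continuous_const
    exact hc.comp_aestronglyMeasurable hu1.1
  have hm_int : Integrable m := by
    refine hu1.mono' hm_meas ?_
    filter_upwards with y
    rw [Real.norm_eq_abs, abs_of_nonneg (hm_nonneg y)]
    exact hm_le y
  have hw_int : Integrable w := by
    have h := (hu1.const_mul ζ).add (hm_int.const_mul η)
    exact h.congr (Eventually.of_forall fun y => (hw_eq y).symm)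
  -- the integral identity σ ∫ u = ∫ w
  have hconv_total : ∫ x, conv a w x = ∫ y, w y := by
    have h3 := stmt17_fubini hk hs hw_int (g := fun _ => (1 : ℝ)) continuous_const
      (fun x => by norm_num)
    simpa [integral_sub_right_eq_self, hk.mass_one] using h3
  have hσint : σ * ∫ x, u x = ∫ y, w y := by
    have h1 : ∫ x, σ * u x = ∫ x, conv a w x := integral_congr_ae heq
    rw [integral_const_mul] at h1
    rw [h1, hconv_total]
  have hint_split : ∫ y, w y = ζ * (∫ y, u y) + η * ∫ y, m y := by
    have : ∫ y, w y = ∫ y, (ζ * u y + η * m y) :=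
      integral_congr_ae (Eventually.of_forall fun y => hw_eq y)
    rw [this, integral_add (hu1.const_mul ζ) (hm_int.const_mul η),
      integral_const_mul, integral_const_mul]
  have hIu : 0 ≤ ∫ x, u x := integral_nonneg hupos
  have hIm : 0 ≤ ∫ y, m y := integral_nonneg hm_nonneg
  have hIm0 : ∫ y, m y = 0 := by
    have h1 : σ * (∫ x, u x) ≤ ζ * ∫ x, u x := mul_le_mul_of_nonneg_right hσ hIu
    nlinarith
  have hIu0 : σ * ∫ x, u x = ζ * ∫ x, u x := by
    rw [hσint, hint_split, hIm0]; ring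
  have hfinal : (∫ x, u x) = 0 := by
    rcases lt_or_eq_of_le hσ with hlt | hEq
    · have h5 : (ζ - σ) * (∫ x, u x) = 0 := by linarith
      rcases mul_eq_zero.mp h5 with h6 | h6
      · exfalso; linarith
      · exact h6
    · subst hEq
      -- now σ = ζ and `u = a ∗ u` a.e.
      have hm_ae : m =ᵐ[volume] 0 :=
        (integral_eq_zero_iff_of_nonneg hm_nonneg hm_int).mp hIm0
      have hconv_eq : ∀ x, conv a w x = σ * conv a u x := by
        intro x
        simp only [conv]
        rw [← integral_const_mul]
        refine integral_congr_ae ?_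
        filter_upwards [hm_ae] with y hy
        have hy' : m y = 0 := hy
        rw [hw_eq y, hy']; ring
      have hueq : u =ᵐ[volume] conv a u := by
        filter_upwards [heq] with x hx
        have hx' : σ * u x = σ * conv a u x := by rw [hx, hconv_eq x]
        exact mul_left_cancel₀ (ne_of_gt hζ) hx'
      set φ : ℝ → ℝ := fun k => ∫ x, u x * Real.cos (k * x) with hφdef
      have hφ0 : ∀ k : ℝ, k ≠ 0 → φ k = 0 := by
        intro k hkne
        have hcos : Continuous fun x : ℝ => Real.cos (k * x) := by fun_prop
        set A : ℝ := ∫ z, a z * Real.cos (k * z) with hAdef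
        have hAk : φ k = A * φ k := by
          have h1 : φ k = ∫ x, conv a u x * Real.cos (k * x) :=
            integral_congr_ae (hueq.mono fun x hx => by
              show u x * Real.cos (k * x) = conv a u x * Real.cos (k * x)
              rw [hx])
          have h2 := stmt17_fubini hk hs hu1 (g := fun x => Real.cos (k * x)) hcos
            (fun x => Real.abs_cos_le_one _)
          beta_reduce at h2
          have h3 : ∀ y : ℝ, u y * (∫ x, a (x - y) * Real.cos (k * x))
              = A * (u y * Real.cos (k * y)) := by
            intro y
            rw [stmt17_inner hk hs k y]; ring
          calc φ k = ∫ x, conv a u x * Real.cos (k * x) := h1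
            _ = ∫ y, u y * ∫ x, a (x - y) * Real.cos (k * x) := h2
            _ = ∫ y, A * (u y * Real.cos (k * y)) :=
                integral_congr_ae (Eventually.of_forall fun y => h3 y)
            _ = A * φ k := by rw [integral_const_mul]
        have hAlt := stmt17_A_lt_one hk hs hkne
        have h7 : (1 - A) * φ k = 0 := by linarith
        rcases mul_eq_zero.mp h7 with h8 | h8
        · exfalso; rw [← hAdef] at hAlt; linarith
        · exact h8
      have hφc : Continuous φ := by
        refine continuous_of_dominated (bound := fun x => |u x|) ?_ ?_ hu1.abs ?_
        · intro k
          exact hu1.1.mul (by fun_prop : Continuous fun x : ℝ =>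
            Real.cos (k * x)).aestronglyMeasurable
        · intro k
          filter_upwards with x
          rw [Real.norm_eq_abs, abs_mul]
          exact mul_le_of_le_one_right (abs_nonneg _) (Real.abs_cos_le_one _)
        · filter_upwards with x
          exact continuous_const.mul (by fun_prop)
      have hten : Tendsto φ (nhdsWithin (0 : ℝ) {(0 : ℝ)}ᶜ) (nhds (φ 0)) :=
        (hφc.tendsto 0).mono_left nhdsWithin_le_nhds
      have hten0 : Tendsto φ (nhdsWithin (0 : ℝ) {(0 : ℝ)}ᶜ) (nhds 0) := by
        refine Tendsto.congr' ?_ tendsto_const_nhds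
        filter_upwards [self_mem_nhdsWithin] with k hkmem
        exact (hφ0 k hkmem).symm
      have hφzero : φ 0 = 0 := tendsto_nhds_unique hten hten0
      have : φ 0 = ∫ x, u x := by
        simp [hφdef]
      linarith
  exact (integral_eq_zero_iff_of_nonneg hupos hu1).mp hfinal
end
end
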